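/- Let n be a positive integer and a_1, ..., a_n pairwise distinct positive integers. If there exist nonnegative integers x_1, ..., x_n and an integer t ≥ 2 such that a_1·x_1 + ... + a_n·x_n = t·a_1·a_2·...·a_n, then there exist integers x_i' with 0 ≤ x_i' ≤ x_i for all i such that a_1·x_1' + ... + a_n·x_n' = a_1·a_2·...·a_n. -/
import Mathlib

def Egood (ι : Type) [DecidableEq ι] (N : ℕ) : Prop :=
  ∀ (s : Finset ι) (d y : ι → ℕ), (∀ i ∈ s, 0 < d i) → Set.InjOn d s →
    (∏ i ∈ s, d i) ∣ N → 2 * N ≤ ∑ i ∈ s, d i * y i →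
    ∃ z : ι → ℕ, (∀ i, z i ≤ y i) ∧ ∑ i ∈ s, d i * z i = N

lemma blocks {ι : Type} [DecidableEq ι] {q' : ℕ} (hE : Egood ι q') :
    ∀ (k : ℕ) (s : Finset ι) (d y : ι → ℕ), (∀ i ∈ s, 0 < d i) → Set.InjOn d s →
    (∏ i ∈ s, d i) ∣ q' → (k + 1) * q' ≤ ∑ i ∈ s, d i * y i →
    ∃ z : ι → ℕ, (∀ i, z i ≤ y i) ∧ ∑ i ∈ s, d i * z i = k * q' := by
  intro k
  induction k with
  | zero => exact fun s d y _ _ _ _ => ⟨0, fun i => Nat.zero_le _, by simp⟩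
  | succ k ih =>
    intro s d y hd hinj hdvd htot
    have h2q : 2 * q' ≤ ∑ i ∈ s, d i * y i :=
      le_trans (Nat.mul_le_mul_right _ (by omega)) htot
    obtain ⟨z₁, hz₁le, hz₁⟩ := hE s d y hd hinj hdvd h2q
    have heq : ∑ i ∈ s, d i * y i = q' + ∑ i ∈ s, d i * (y i - z₁ i) := by
      rw [← hz₁, ← Finset.sum_add_distrib]
      refine Finset.sum_congr rfl fun i _ => ?_
      have h := hz₁le i
      have : y i = z₁ i + (y i - z₁ i) := by omega
      conv_lhs => rw [this]
      ring
    have htot' : (k + 1) * q' ≤ ∑ i ∈ s, d i * (y i - z₁ i) := by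
      have hs : (k + 1 + 1) * q' = (k + 1) * q' + q' := by ring
      rw [hs] at htot
      omega
    obtain ⟨z₂, hz₂le, hz₂⟩ := ih s d (fun i => y i - z₁ i) hd hinj hdvd htot'
    refine ⟨fun i => z₁ i + z₂ i, fun i => ?_, ?_⟩
    · have := hz₁le i; have := hz₂le i; simp only at *; omega
    · have : ∑ i ∈ s, d i * (z₁ i + z₂ i) = ∑ i ∈ s, d i * z₁ i + ∑ i ∈ s, d i * z₂ i := by
        rw [← Finset.sum_add_distrib]
        exact Finset.sum_congr rfl fun i _ => by ring
      rw [this, hz₁, hz₂]; ring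


-- case r'=2 construction: values {1=d i₀, p=d i, q=d j}, q ≥ 3
lemma case2aux {ι : Type} [DecidableEq ι] {N : ℕ} {d y : ι → ℕ}
    (i₀ i j : ι) (h0i : i₀ ≠ i) (h0j : i₀ ≠ j) (hij : i ≠ j)
    (h01 : d i₀ = 1) (hp2 : 2 ≤ d i) (hq3 : 3 ≤ d j)
    (hcapq : d j * y j + d j ≤ N)
    (hBp : 2 * N + 1 ≤ N + N / d i + d i * y i)
    (hBq : 2 * N + 1 ≤ N + N / d j + d j * y j)
    (hy₀ : d i + d j ≤ y i₀) :
    ∃ z : ι → ℕ, (∀ m, z m ≤ y m) ∧ (∀ m, m ∉ ({i₀, i, j} : Finset ι) → z m = 0) ∧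
      d i₀ * z i₀ + d i * z i + d j * z j = N := by
  set p := d i with hp
  set q := d j with hq
  obtain ⟨ρ, hρeq, hρlb⟩ : ∃ ρ, q * y j + ρ = N ∧ q ≤ ρ := ⟨N - q * y j, by omega, by omega⟩
  -- division facts
  have hA2 : 2 * (N / 2) ≤ N := Nat.mul_div_le N 2 |>.trans_eq rfl
  have hAq : N / q ≤ N / 3 := Nat.div_le_div_left hq3 (by norm_num)
  have hA3 : N / 3 ≤ N / 2 := Nat.div_le_div_left (by norm_num) (by norm_num)
  have hAp : N / p ≤ N / 2 := Nat.div_le_div_left hp2 (by norm_num)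
  -- ρ < N / q
  have hρub : ρ < N / q := by omega
  set zp := ρ / p with hzp
  set rem := ρ % p with hrem
  have hdm : p * zp + rem = ρ := Nat.div_add_mod ρ p
  have hremlt : rem < p := Nat.mod_lt _ (by omega)
  have hzpy : zp ≤ y i := by
    have h1 : p * zp ≤ ρ := by omega
    have h2 : p * zp < p * y i := by omega
    exact le_of_lt (Nat.lt_of_mul_lt_mul_left h2)
  have hii₀ : i ≠ i₀ := Ne.symm h0i
  have hji₀ : j ≠ i₀ := Ne.symm h0j
  have hji : j ≠ i := Ne.symm hij
  refine ⟨fun m => if m = i₀ then rem else if m = i then zp else if m = j then y j else 0,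
    fun m => ?_, fun m hm => ?_, ?_⟩
  · dsimp only
    by_cases e0 : m = i₀
    · subst e0; rw [if_pos rfl]; omega
    · by_cases e1 : m = i
      · subst e1; simp [e0, hzpy]
      · by_cases e2 : m = j
        · subst e2; simp [e0, e1]
        · simp [e0, e1, e2]
  · simp only [Finset.mem_insert, Finset.mem_singleton] at hm
    push_neg at hm
    dsimp only
    simp [hm.1, hm.2.1, hm.2.2]
  · dsimp only
    simp only [if_pos rfl, hii₀, hji₀, hji, hij, if_false, if_true, ite_false, ite_true,
      if_neg hii₀, if_neg hji₀, if_neg hji, h01, one_mul]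
    omega


lemma case3aux {ι : Type} [DecidableEq ι] {N : ℕ} {d y : ι → ℕ}
    (i₂ i₃ i₄ : ι) (h23 : i₂ ≠ i₃) (h24 : i₂ ≠ i₄) (h34 : i₃ ≠ i₄)
    (hd2 : d i₂ = 2) (hd3 : d i₃ = 3) (hd4 : 4 ≤ d i₄)
    (hN24 : 24 ≤ N)
    (hcap4 : d i₄ * y i₄ + d i₄ ≤ N)
    (hB2 : 2 * N + 1 ≤ N + N / 2 + 2 * y i₂)
    (hB3 : 2 * N + 1 ≤ N + N / 3 + 3 * y i₃)
    (hB4 : 2 * N + 1 ≤ N + N / d i₄ + d i₄ * y i₄) :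
    ∃ z : ι → ℕ, (∀ m, z m ≤ y m) ∧ (∀ m, m ∉ ({i₂, i₃, i₄} : Finset ι) → z m = 0) ∧
      d i₂ * z i₂ + d i₃ * z i₃ + d i₄ * z i₄ = N := by
  obtain ⟨ρ, hρeq, hρlb⟩ : ∃ ρ, d i₄ * y i₄ + ρ = N ∧ d i₄ ≤ ρ := ⟨N - d i₄ * y i₄, by omega, by omega⟩
  have hA2 : 2 * (N / 2) ≤ N := Nat.mul_div_le N 2 |>.trans_eq rfl
  have hA3 : 3 * (N / 3) ≤ N := Nat.mul_div_le N 3 |>.trans_eq rfl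
  have hA4 : 4 * (N / 4) ≤ N := Nat.mul_div_le N 4 |>.trans_eq rfl
  have hA44 : N / d i₄ ≤ N / 4 := Nat.div_le_div_left hd4 (by norm_num)
  have hA43 : N / 4 ≤ N / 3 := Nat.div_le_div_left (by norm_num) (by norm_num)
  have hA32 : N / 3 ≤ N / 2 := Nat.div_le_div_left (by norm_num) (by norm_num)
  have hρub : ρ < N / d i₄ := by omega
  set q3 := ρ / 3 with hq3def
  set r3 := ρ % 3 with hr3def
  have hdm : 3 * q3 + r3 = ρ := Nat.div_add_mod ρ 3
  have hr3lt : r3 < 3 := Nat.mod_lt _ (by norm_num)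
  have hy2 : 2 ≤ y i₂ := by omega
  have hy3q : q3 < y i₃ := by
    have h1 : 3 * q3 ≤ ρ := by omega
    have h2 : 3 * q3 < 3 * y i₃ := by omega
    omega
  set z3 : ℕ := q3 - (if r3 = 1 then 1 else 0) with hz3def
  set z2 : ℕ := if r3 = 1 then 2 else if r3 = 2 then 1 else 0 with hz2def
  have hq3pos : r3 = 1 → 1 ≤ q3 := by intro h; omega
  have hkey : 2 * z2 + 3 * z3 = ρ := by
    rcases (by omega : r3 = 0 ∨ r3 = 1 ∨ r3 = 2) with h | h | h <;>
      simp only [hz2def, hz3def, h] <;> norm_num <;> omega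
  have hz3y : z3 ≤ y i₃ := by
    have : z3 ≤ q3 := by omega
    omega
  have hz2y : z2 ≤ y i₂ := by
    have : z2 ≤ 2 := by rw [hz2def]; split_ifs <;> norm_num
    omega
  have h32 : i₃ ≠ i₂ := Ne.symm h23
  have h42 : i₄ ≠ i₂ := Ne.symm h24
  have h43 : i₄ ≠ i₃ := Ne.symm h34
  refine ⟨fun m => if m = i₂ then z2 else if m = i₃ then z3 else if m = i₄ then y i₄ else 0,
    fun m => ?_, fun m hm => ?_, ?_⟩
  · dsimp only
    by_cases e0 : m = i₂
    · subst e0; rw [if_pos rfl]; omega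
    · by_cases e1 : m = i₃
      · subst e1; rw [if_neg e0, if_pos rfl]; omega
      · by_cases e2 : m = i₄
        · subst e2; rw [if_neg e0, if_neg e1, if_pos rfl]
        · rw [if_neg e0, if_neg e1, if_neg e2]; omega
  · simp only [Finset.mem_insert, Finset.mem_singleton] at hm
    push_neg at hm
    dsimp only
    simp [hm.1, hm.2.1, hm.2.2]
  · dsimp only
    rw [if_pos rfl, if_neg h32, if_pos rfl, if_neg h42, if_neg h43, if_pos rfl, hd2, hd3]
    omega

lemma Emain (ι : Type) [DecidableEq ι] (N : ℕ) : Egood ι N := by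
  induction N using Nat.strong_induction_on with
  | _ N ih =>
  intro s d y hd hinj hdvd hU
  rcases Nat.eq_zero_or_pos N with hN0 | hNpos
  · exact ⟨0, fun i => Nat.zero_le _, by simp [hN0]⟩
  -- divisibility of each value
  have hdvd' : ∀ i ∈ s, d i ∣ N := fun i hi => (Finset.dvd_prod_of_mem d hi).trans hdvd
  set U := ∑ i ∈ s, d i * y i with hUdef
  by_cases h1 : ∃ i ∈ s, N / d i ≤ y i
  · -- single class win
    obtain ⟨i, hi, hyi⟩ := h1
    refine ⟨fun j => if j = i then N / d i else 0, fun j => ?_, ?_⟩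
    · by_cases hj : j = i
      · subst hj; simp [hyi]
      · simp [hj]
    · rw [Finset.sum_eq_single_of_mem i hi]
      · simp [Nat.mul_div_cancel' (hdvd' i hi)]
      · intro j _ hj; simp [hj]
  push_neg at h1
  have hcapA : ∀ i ∈ s, d i * y i + d i ≤ N := by
    intro i hi
    have h := h1 i hi
    have : d i * (y i + 1) ≤ d i * (N / d i) := Nat.mul_le_mul_left _ (by omega)
    rw [Nat.mul_div_cancel' (hdvd' i hi)] at this
    nlinarith [this]
  by_cases h2 : ∃ i ∈ s, 2 ≤ d i ∧ N + N / d i + d i * y i ≤ U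
  · -- blocks win
    obtain ⟨i, hi, hdi2, hwin⟩ := h2
    set q' := N / d i with hq'def
    have hNq : d i * q' = N := Nat.mul_div_cancel' (hdvd' i hi)
    have hq'N : q' < N := Nat.div_lt_self hNpos hdi2
    have hEq' := ih q' hq'N
    have hprodsplit : d i * ∏ j ∈ s.erase i, d j = ∏ j ∈ s, d j :=
      Finset.mul_prod_erase s d hi
    have hq'dvd : (∏ j ∈ s.erase i, d j) ∣ q' := by
      have h1' : d i * ∏ j ∈ s.erase i, d j ∣ d i * q' := by
        rw [hprodsplit, hNq]; exact hdvd
      exact (Nat.mul_dvd_mul_iff_left (hd i hi)).mp h1'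
    have hsplit : ∑ j ∈ s.erase i, d j * y j + d i * y i = U :=
      Finset.sum_erase_add s _ hi
    have htot : (d i + 1) * q' ≤ ∑ j ∈ s.erase i, d j * y j := by
      have : (d i + 1) * q' = N + q' := by rw [add_mul, one_mul, hNq]
      omega
    obtain ⟨z, hzle, hzsum⟩ := blocks hEq' (d i) (s.erase i) d y
      (fun j hj => hd j (Finset.mem_of_mem_erase hj))
      (hinj.mono (by simp [Finset.erase_subset])) hq'dvd htot
    refine ⟨fun j => if j = i then 0 else z j, fun j => ?_, ?_⟩
    · by_cases hj : j = i <;> simp [hj, hzle j]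
    · have : ∑ j ∈ s, d j * (if j = i then 0 else z j)
          = ∑ j ∈ s.erase i, d j * (if j = i then 0 else z j)
            + d i * (if i = i then 0 else z i) := (Finset.sum_erase_add s _ hi).symm
      rw [this]
      simp only [if_pos rfl, mul_zero, add_zero]
      rw [show ∑ j ∈ s.erase i, d j * (if j = i then 0 else z j)
          = ∑ j ∈ s.erase i, d j * z j from Finset.sum_congr rfl fun j hj => by
            simp [Finset.ne_of_mem_erase hj]]
      rw [hzsum, hNq]; simp
  push_neg at h2
  -- hB : lose bounds
  have hB : ∀ i ∈ s, 2 ≤ d i → U + 1 ≤ N + N / d i + d i * y i := by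
    intro i hi h2i
    have := h2 i hi h2i
    omega
  -- partition into value-1 part and values ≥ 2 part
  set s₂ := s.filter (fun i => 2 ≤ d i) with hs₂def
  set s₁ := s.filter (fun i => ¬ 2 ≤ d i) with hs₁def
  have hs₂sub : s₂ ⊆ s := Finset.filter_subset _ _
  have hs₁sub : s₁ ⊆ s := Finset.filter_subset _ _
  have hmem₂ : ∀ i ∈ s₂, 2 ≤ d i := fun i hi => (Finset.mem_filter.mp hi).2
  have hs₁val : ∀ i ∈ s₁, d i = 1 := by
    intro i hi
    have h2 := (Finset.mem_filter.mp hi).2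
    have := hd i (hs₁sub hi)
    omega
  have hsplitU : (∑ i ∈ s₂, d i * y i) + ∑ i ∈ s₁, d i * y i = U :=
    Finset.sum_filter_add_sum_filter_not s _ _
  have hs₁card : s₁.card ≤ 1 := by
    refine Finset.card_le_one.mpr (fun a ha b hb => hinj (hs₁sub ha) (hs₁sub hb) ?_)
    rw [hs₁val a ha, hs₁val b hb]
  have hU₁ : (∑ i ∈ s₁, d i * y i) + 1 ≤ N := by
    rcases s₁.eq_empty_or_nonempty with he | ⟨i₀, h0⟩
    · rw [he]; simp; omega
    · have hs₁eq : s₁ = {i₀} :=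
        Finset.eq_singleton_iff_unique_mem.mpr
          ⟨h0, fun b hb => Finset.card_le_one.mp hs₁card b hb i₀ h0⟩
      rw [hs₁eq, Finset.sum_singleton]
      have := hcapA i₀ (hs₁sub h0)
      have := hs₁val i₀ h0
      omega
  -- sum of lose-bounds over s₂
  have hU₂leU : (∑ i ∈ s₂, d i * y i) ≤ U := by omega
  have hBsum : s₂.card * (U + 1) ≤ s₂.card * N + (∑ i ∈ s₂, N / d i) + ∑ i ∈ s₂, d i * y i := by
    have h1 : ∑ _i ∈ s₂, (U + 1) ≤ ∑ i ∈ s₂, (N + N / d i + d i * y i) :=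
      Finset.sum_le_sum (fun i hi => hB i (hs₂sub hi) (hmem₂ i hi))
    rw [Finset.sum_const, smul_eq_mul] at h1
    calc s₂.card * (U + 1) ≤ ∑ i ∈ s₂, (N + N / d i + d i * y i) := h1
      _ = s₂.card * N + (∑ i ∈ s₂, N / d i) + ∑ i ∈ s₂, d i * y i := by
          rw [Finset.sum_add_distrib, Finset.sum_add_distrib, Finset.sum_const, smul_eq_mul]
  have hA2 : 2 * (N / 2) ≤ N := Nat.mul_div_le N 2 |>.trans_eq rfl
  have hA3 : 3 * (N / 3) ≤ N := Nat.mul_div_le N 3 |>.trans_eq rfl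
  have hA4 : 4 * (N / 4) ≤ N := Nat.mul_div_le N 4 |>.trans_eq rfl
  rcases Nat.lt_or_ge s₂.card 4 with hc4 | hc4
  · -- card ≤ 3
    rcases (by omega : s₂.card = 0 ∨ s₂.card = 1 ∨ s₂.card = 2 ∨ s₂.card = 3) with hc | hc | hc | hc
    · -- card 0 : contradiction
      exfalso
      have : s₂ = ∅ := Finset.card_eq_zero.mp hc
      rw [this] at hsplitU
      simp at hsplitU
      omega
    · -- card 1 : contradiction
      exfalso
      obtain ⟨a, ha⟩ := Finset.card_eq_one.mp hc
      have ha₂ : a ∈ s₂ := by rw [ha]; simp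
      have : (∑ i ∈ s₂, d i * y i) = d a * y a := by rw [ha, Finset.sum_singleton]
      have hcap := hcapA a (hs₂sub ha₂)
      have := hmem₂ a ha₂
      omega
    · -- card 2
      obtain ⟨a, b, hab, hs₂eq⟩ := Finset.card_eq_two.mp hc
      have ha₂ : a ∈ s₂ := by rw [hs₂eq]; simp
      have hb₂ : b ∈ s₂ := by rw [hs₂eq]; simp
      have has : a ∈ s := hs₂sub ha₂
      have hbs : b ∈ s := hs₂sub hb₂
      have ha2 : 2 ≤ d a := hmem₂ a ha₂
      have hb2 : 2 ≤ d b := hmem₂ b hb₂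
      have hdab : d a ≠ d b := fun h => hab (hinj has hbs h)
      have hU₂eq : (∑ i ∈ s₂, d i * y i) = d a * y a + d b * y b := by
        rw [hs₂eq, Finset.sum_pair hab]
      have hcapa := hcapA a has
      have hcapb := hcapA b hbs
      -- s₁ nonempty
      have hs₁ne : s₁.Nonempty := by
        rcases s₁.eq_empty_or_nonempty with he | hne
        · exfalso; rw [he] at hsplitU; simp at hsplitU; omega
        · exact hne
      obtain ⟨i₀, h0⟩ := hs₁ne
      have h0s : i₀ ∈ s := hs₁sub h0
      have h01 : d i₀ = 1 := hs₁val i₀ h0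
      have hs₁eq : s₁ = {i₀} :=
        Finset.eq_singleton_iff_unique_mem.mpr
          ⟨h0, fun b hb => Finset.card_le_one.mp hs₁card b hb i₀ h0⟩
      have hU₁eq : (∑ i ∈ s₁, d i * y i) = y i₀ := by
        rw [hs₁eq, Finset.sum_singleton, h01, one_mul]
      have h0a : i₀ ≠ a := fun h => by rw [h] at h01; omega
      have h0b : i₀ ≠ b := fun h => by rw [h] at h01; omega
      have hy₀ : d a + d b ≤ y i₀ := by omega
      have hBa : 2 * N + 1 ≤ N + N / d a + d a * y a := by
        have := hB a has ha2; omega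
      have hBb : 2 * N + 1 ≤ N + N / d b + d b * y b := by
        have := hB b hbs hb2; omega
      -- helper to finish given ordered pair
      have finish : ∀ (p q : ι), p ∈ s → q ∈ s → p ≠ q → i₀ ≠ p → i₀ ≠ q →
          2 ≤ d p → 3 ≤ d q → d q * y q + d q ≤ N →
          2 * N + 1 ≤ N + N / d p + d p * y p →
          2 * N + 1 ≤ N + N / d q + d q * y q →
          d p + d q ≤ y i₀ →
          ∃ z : ι → ℕ, (∀ i, z i ≤ y i) ∧ ∑ i ∈ s, d i * z i = N := by
        intro p q hps hqs hpq h0p h0q hp2 hq3 hcapq hBp hBq hy0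
        obtain ⟨z, hzle, hzsupp, hzsum⟩ :=
          case2aux i₀ p q h0p h0q hpq h01 hp2 hq3 hcapq hBp hBq hy0
        refine ⟨z, hzle, ?_⟩
        have hsub : ({i₀, p, q} : Finset ι) ⊆ s := by
          intro m hm
          simp only [Finset.mem_insert, Finset.mem_singleton] at hm
          rcases hm with h | h | h <;> subst h <;> assumption
        have hsumeq : ∑ i ∈ s, d i * z i = ∑ i ∈ ({i₀, p, q} : Finset ι), d i * z i :=
          (Finset.sum_subset hsub (fun x _ hnx => by rw [hzsupp x hnx, mul_zero])).symm
        rw [hsumeq, Finset.sum_insert (by simp [h0p, h0q]),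
          Finset.sum_insert (by simp [hpq]), Finset.sum_singleton]
        omega
      rcases Nat.lt_or_ge (d a) (d b) with hlt | hge
      · exact finish a b has hbs hab h0a h0b ha2 (by omega) hcapb hBa hBb hy₀
      · have hgt : d b < d a := by omega
        exact finish b a hbs has (Ne.symm hab) h0b h0a hb2 (by omega) hcapa hBb hBa (by omega)
    · -- card 3
      have hSlb : N + 3 ≤ ∑ i ∈ s₂, N / d i := by
        rw [hc] at hBsum
        omega
      have h2ex : ∃ i ∈ s₂, d i = 2 := by
        by_contra hcon; push_neg at hcon
        have hle : ∀ i ∈ s₂, N / d i ≤ N / 3 := by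
          intro i hi
          have := hmem₂ i hi
          have := hcon i hi
          exact Nat.div_le_div_left (by omega) (by norm_num)
        have := Finset.sum_le_card_nsmul s₂ _ (N / 3) hle
        rw [hc, smul_eq_mul] at this
        omega
      obtain ⟨i₂, hi₂mem, hd2⟩ := h2ex
      have h3ex : ∃ i ∈ s₂, d i = 3 := by
        by_contra hcon; push_neg at hcon
        have hle : ∀ j ∈ s₂.erase i₂, N / d j ≤ N / 4 := by
          intro j hj
          obtain ⟨hji₂, hjmem⟩ := Finset.mem_erase.mp hj
          have h2j := hmem₂ j hjmem
          have hne2 : d j ≠ 2 := fun hh =>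
            hji₂ (hinj (hs₂sub hjmem) (hs₂sub hi₂mem) (hh.trans hd2.symm))
          have hne3 : d j ≠ 3 := hcon j hjmem
          exact Nat.div_le_div_left (by omega) (by norm_num)
        have hcarde : (s₂.erase i₂).card = 2 := by
          rw [Finset.card_erase_of_mem hi₂mem, hc]
        have hsum_e := Finset.sum_le_card_nsmul (s₂.erase i₂) _ (N / 4) hle
        rw [hcarde, smul_eq_mul] at hsum_e
        have hSsplit : (∑ j ∈ s₂.erase i₂, N / d j) + N / d i₂ = ∑ i ∈ s₂, N / d i :=
          Finset.sum_erase_add _ _ hi₂mem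
        rw [hd2] at hSsplit
        omega
      obtain ⟨i₃, hi₃mem, hd3⟩ := h3ex
      have h23 : i₂ ≠ i₃ := fun h => by rw [h, hd3] at hd2; omega
      have hi₃e : i₃ ∈ s₂.erase i₂ := Finset.mem_erase.mpr ⟨Ne.symm h23, hi₃mem⟩
      have hcard1 : ((s₂.erase i₂).erase i₃).card = 1 := by
        rw [Finset.card_erase_of_mem hi₃e, Finset.card_erase_of_mem hi₂mem, hc]
      obtain ⟨i₄, hi₄eq⟩ := Finset.card_eq_one.mp hcard1
      have hi₄mem' : i₄ ∈ (s₂.erase i₂).erase i₃ := by rw [hi₄eq]; simp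
      have h43 : i₄ ≠ i₃ := (Finset.mem_erase.mp hi₄mem').1
      have hi₄mem'' : i₄ ∈ s₂.erase i₂ := (Finset.mem_erase.mp hi₄mem').2
      have h42 : i₄ ≠ i₂ := (Finset.mem_erase.mp hi₄mem'').1
      have hi₄mem : i₄ ∈ s₂ := (Finset.mem_erase.mp hi₄mem'').2
      have hd4 : 4 ≤ d i₄ := by
        have h2le := hmem₂ i₄ hi₄mem
        have hne2 : d i₄ ≠ 2 := fun hh =>
          h42 (hinj (hs₂sub hi₄mem) (hs₂sub hi₂mem) (hh.trans hd2.symm))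
        have hne3 : d i₄ ≠ 3 := fun hh =>
          h43 (hinj (hs₂sub hi₄mem) (hs₂sub hi₃mem) (hh.trans hd3.symm))
        omega
      -- s₂ = {i₂, i₃, i₄}
      have hsub3 : ({i₂, i₃, i₄} : Finset ι) ⊆ s₂ := by
        intro m hm
        simp only [Finset.mem_insert, Finset.mem_singleton] at hm
        rcases hm with h | h | h <;> subst h <;> assumption
      have hcard3 : ({i₂, i₃, i₄} : Finset ι).card = 3 := by
        rw [Finset.card_insert_of_notMem (by simp [h23, Ne.symm h42]),
          Finset.card_insert_of_notMem (by simp [Ne.symm h43]), Finset.card_singleton]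
      have hs₂eq3 : s₂ = ({i₂, i₃, i₄} : Finset ι) :=
        (Finset.eq_of_subset_of_card_le hsub3 (by omega)).symm
      have hN24 : 24 ≤ N := by
        have hprodle : (∏ i ∈ s₂, d i) ≤ ∏ i ∈ s, d i :=
          Finset.prod_le_prod_of_subset_of_one_le' hs₂sub (fun i hi _ => hd i hi)
        have hprod₂ : (∏ i ∈ s₂, d i) = d i₂ * (d i₃ * d i₄) := by
          rw [hs₂eq3, Finset.prod_insert (by simp [h23, Ne.symm h42]),
            Finset.prod_insert (by simp [Ne.symm h43]), Finset.prod_singleton]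
        have hNprod : (∏ i ∈ s, d i) ≤ N := Nat.le_of_dvd hNpos hdvd
        rw [hprod₂, hd2, hd3] at hprodle
        omega
      have hB2' : 2 * N + 1 ≤ N + N / 2 + 2 * y i₂ := by
        have := hB i₂ (hs₂sub hi₂mem) (by omega)
        rw [hd2] at this; omega
      have hB3' : 2 * N + 1 ≤ N + N / 3 + 3 * y i₃ := by
        have := hB i₃ (hs₂sub hi₃mem) (by omega)
        rw [hd3] at this; omega
      have hB4' : 2 * N + 1 ≤ N + N / d i₄ + d i₄ * y i₄ := by
        have := hB i₄ (hs₂sub hi₄mem) (by omega)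
        omega
      obtain ⟨z, hzle, hzsupp, hzsum⟩ :=
        case3aux i₂ i₃ i₄ h23 (Ne.symm h42) (Ne.symm h43) hd2 hd3 hd4 hN24
          (hcapA i₄ (hs₂sub hi₄mem)) hB2' hB3' hB4'
      refine ⟨z, hzle, ?_⟩
      have hsub : ({i₂, i₃, i₄} : Finset ι) ⊆ s := hsub3.trans hs₂sub
      have hsumeq : ∑ i ∈ s, d i * z i = ∑ i ∈ ({i₂, i₃, i₄} : Finset ι), d i * z i :=
        (Finset.sum_subset hsub (fun x _ hnx => by rw [hzsupp x hnx, mul_zero])).symm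
      rw [hsumeq, Finset.sum_insert (by simp [h23, Ne.symm h42]),
        Finset.sum_insert (by simp [Ne.symm h43]), Finset.sum_singleton]
      omega
  · -- card ≥ 4 : contradiction
    exfalso
    set c := s₂.card with hcdef
    set Sd := ∑ i ∈ s₂, N / d i with hSdef
    have hSub : Sd ≤ N / 2 + c * (N / 3) := by
      by_cases h2e : ∃ i ∈ s₂, d i = 2
      · obtain ⟨i₂, hi₂, hd2⟩ := h2e
        have hSsplit : (∑ j ∈ s₂.erase i₂, N / d j) + N / d i₂ = Sd :=
          Finset.sum_erase_add _ _ hi₂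
        have hle : ∀ j ∈ s₂.erase i₂, N / d j ≤ N / 3 := by
          intro j hj
          obtain ⟨hji₂, hjmem⟩ := Finset.mem_erase.mp hj
          have h2j := hmem₂ j hjmem
          have hne2 : d j ≠ 2 := fun hh =>
            hji₂ (hinj (hs₂sub hjmem) (hs₂sub hi₂) (hh.trans hd2.symm))
          exact Nat.div_le_div_left (by omega) (by norm_num)
        have he := Finset.sum_le_card_nsmul (s₂.erase i₂) _ (N / 3) hle
        rw [Finset.card_erase_of_mem hi₂, smul_eq_mul] at he
        have hce : (c - 1) * (N / 3) ≤ c * (N / 3) := Nat.mul_le_mul_right _ (by omega)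
        rw [hd2] at hSsplit
        rw [← hcdef] at he
        omega
      · push_neg at h2e
        have hle : ∀ i ∈ s₂, N / d i ≤ N / 3 := by
          intro i hi
          have := hmem₂ i hi
          have := h2e i hi
          exact Nat.div_le_div_left (by omega) (by norm_num)
        have := Finset.sum_le_card_nsmul s₂ _ (N / 3) hle
        rw [smul_eq_mul, ← hcdef] at this
        omega
    -- final arithmetic contradiction
    have f1 : c * U + c ≤ c * N + N / 2 + c * (N / 3) + U := by
      have : c * (U + 1) = c * U + c := by ring
      omega
    have f8 : 3 * (c * (N / 3)) ≤ c * N := by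
      calc 3 * (c * (N / 3)) = c * (3 * (N / 3)) := by ring
        _ ≤ c * N := Nat.mul_le_mul_left c hA3
    have f4 : 2 * (c * N) ≤ c * U := by
      calc 2 * (c * N) = c * (2 * N) := by ring
        _ ≤ c * U := Nat.mul_le_mul_left c hU
    have f9 : 4 * U ≤ c * U := Nat.mul_le_mul_right U hc4
    have f10 : 4 * N ≤ c * N := Nat.mul_le_mul_right N hc4
    linarith


theorem stmt0 (n : ℕ) (hn : 0 < n) (a x : Fin n → ℕ) (ha : ∀ i, 0 < a i)
    (hinj : Function.Injective a) (t : ℕ) (ht : 2 ≤ t)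
    (h : ∑ i, a i * x i = t * ∏ i, a i) :
    ∃ x' : Fin n → ℕ, (∀ i, x' i ≤ x i) ∧ ∑ i, a i * x' i = ∏ i, a i := by
  exact Emain (Fin n) (∏ i, a i) Finset.univ a x (fun i _ => ha i) hinj.injOn
    (dvd_refl _) (by rw [h]; exact Nat.mul_le_mul_right _ ht)
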